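/- arXiv:1810.01478 — 4 statements merged into one kernel-verified Lean document; each statement's English description precedes it below -/
import Mathlib

section
/- For every real β > 0, the last term dominates the trace sum asymptotically: lim_{N→∞} [Σ_{k=0}^{N−1} Γ((2k+1)/β)] / Γ((2N−1)/β) = 1. -/
open Filter

/-- Log-convexity lower bound: for `x ≥ 2` and `c > 0`, `Γ(x) * (x-1)^c ≤ Γ(x+c)`. -/
theorem aux_gamma_lb {x c : ℝ} (hc : 0 < c) (hx : 2 ≤ x) :
    Real.Gamma x * (x - 1) ^ c ≤ Real.Gamma (x + c) := by
  have hx1 : (0:ℝ) < x - 1 := by linarith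
  have hx0 : (0:ℝ) < x := by linarith
  have hxc : (0:ℝ) < x + c := by linarith
  have h1c : (0:ℝ) < 1 + c := by linarith
  have hG1pos := Real.Gamma_pos_of_pos hx1
  have hGxpos := Real.Gamma_pos_of_pos hx0
  have hGxcpos := Real.Gamma_pos_of_pos hxc
  -- convexity of log ∘ Gamma
  have hconv := Real.convexOn_log_Gamma.2 (Set.mem_Ioi.mpr hx1) (Set.mem_Ioi.mpr hxc)
      (le_of_lt (div_pos hc h1c)) (le_of_lt (div_pos one_pos h1c))
      (by field_simp; ring)
  have hcombo : (c / (1 + c)) • (x - 1) + (1 / (1 + c)) • (x + c) = x := by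
    rw [smul_eq_mul, smul_eq_mul]
    field_simp
    ring
  rw [hcombo] at hconv
  simp only [Function.comp_apply, smul_eq_mul] at hconv
  -- Γ x = (x-1) Γ (x-1)
  have hG1 : Real.Gamma x = (x - 1) * Real.Gamma (x - 1) := by
    have := Real.Gamma_add_one hx1.ne'
    rwa [sub_add_cancel] at this
  have hlogx : Real.log (Real.Gamma x)
      = Real.log (x - 1) + Real.log (Real.Gamma (x - 1)) := by
    rw [hG1, Real.log_mul hx1.ne' hG1pos.ne']
  -- key inequality in log form
  have key : Real.log (Real.Gamma x) + c * Real.log (x - 1)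
      ≤ Real.log (Real.Gamma (x + c)) := by
    have h2 := mul_le_mul_of_nonneg_left hconv h1c.le
    have h3 : (1 + c) * (c / (1 + c) * Real.log (Real.Gamma (x - 1))
        + 1 / (1 + c) * Real.log (Real.Gamma (x + c)))
        = c * Real.log (Real.Gamma (x - 1)) + Real.log (Real.Gamma (x + c)) := by
      field_simp
    rw [h3] at h2
    rw [hlogx] at h2 ⊢
    nlinarith [h2]
  calc Real.Gamma x * (x - 1) ^ c
      = Real.exp (Real.log (Real.Gamma x)) * Real.exp (Real.log (x - 1) * c) := by
        rw [Real.exp_log hGxpos, ← Real.rpow_def_of_pos hx1]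
    _ = Real.exp (Real.log (Real.Gamma x) + c * Real.log (x - 1)) := by
        rw [← Real.exp_add]; ring_nf
    _ ≤ Real.exp (Real.log (Real.Gamma (x + c))) := Real.exp_le_exp.mpr key
    _ = Real.Gamma (x + c) := Real.exp_log hGxcpos

/-- If `a n > 0` and `a n / a (n+1) → 0`, then `(∑_{k<n} a k) / a n → 0`. -/
theorem aux_sum_div_tendsto {a : ℕ → ℝ} (ha : ∀ n, 0 < a n)
    (hr : Tendsto (fun n => a n / a (n + 1)) atTop (nhds 0)) :
    Tendsto (fun n => (∑ k ∈ Finset.range n, a k) / a n) atTop (nhds 0) := by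
  set T : ℕ → ℝ := fun n => (∑ k ∈ Finset.range n, a k) / a n with hT
  have hT0 : ∀ n, 0 ≤ T n := fun n =>
    div_nonneg (Finset.sum_nonneg fun k _ => (ha k).le) (ha n).le
  have hrec : ∀ n, T (n + 1) = (T n + 1) * (a n / a (n + 1)) := by
    intro n
    have h : T n * a n = ∑ k ∈ Finset.range n, a k := div_mul_cancel₀ _ (ha n).ne'
    show (∑ k ∈ Finset.range (n + 1), a k) / a (n + 1) = _
    rw [Finset.sum_range_succ, ← h]
    ring
  have main : ∀ ε : ℝ, 0 < ε → ε ≤ 1 / 2 → ∃ N, ∀ n ≥ N, T n ≤ ε := by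
    intro ε hε hε2
    obtain ⟨M, hM⟩ := Metric.tendsto_atTop.mp hr (ε / 2) (by positivity)
    have hrle : ∀ n, M ≤ n → a n / a (n + 1) ≤ ε / 2 := by
      intro n hn
      have := hM n hn
      rw [Real.dist_eq, sub_zero,
        abs_of_nonneg (div_nonneg (ha n).le (ha (n + 1)).le)] at this
      linarith
    have claim : ∀ j, T (M + j) ≤ max ε (T M * (1 / 2) ^ j) := by
      intro j
      induction j with
      | zero => simpa using le_max_right ε (T M)
      | succ j ih =>
        have hre : a (M + j) / a (M + j + 1) ≤ ε / 2 := hrle _ (Nat.le_add_right _ _)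
        have hrn : 0 ≤ a (M + j) / a (M + j + 1) := div_nonneg (ha _).le (ha _).le
        have hstep : M + (j + 1) = (M + j) + 1 := by omega
        have heq : T (M + (j + 1)) = (T (M + j) + 1) * (a (M + j) / a (M + j + 1)) := by
          rw [hstep, hrec]
        rw [heq]
        rcases le_or_gt (T (M + j)) 1 with h1 | h1
        · have h2 : (T (M + j) + 1) * (a (M + j) / a (M + j + 1)) ≤ 2 * (ε / 2) :=
            mul_le_mul (by linarith) hre hrn (by norm_num)
          exact le_max_of_le_left (by linarith)
        · rcases le_max_iff.mp ih with hc1 | hc2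
          · linarith
          · have h3 : (T (M + j) + 1) * (a (M + j) / a (M + j + 1))
                ≤ 2 * T (M + j) * (ε / 2) :=
              mul_le_mul (by linarith) hre hrn (by linarith)
            have h4 : 2 * T (M + j) * (ε / 2) = ε * T (M + j) := by ring
            have h5 : ε * T (M + j) ≤ (1 / 2) * T (M + j) :=
              mul_le_mul_of_nonneg_right hε2 (by linarith)
            have h6 : (1 / 2) * T (M + j) ≤ (1 / 2) * (T M * (1 / 2) ^ j) := by linarith
            have h7 : (1 / 2) * (T M * (1 / 2) ^ j) = T M * (1 / 2) ^ (j + 1) := by ring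
            exact le_max_of_le_right (by linarith)
    have hpow : Tendsto (fun j : ℕ => T M * (1 / 2) ^ j) atTop (nhds 0) := by
      have := tendsto_pow_atTop_nhds_zero_of_lt_one (by norm_num : (0:ℝ) ≤ 1/2)
        (by norm_num : (1:ℝ)/2 < 1)
      simpa using this.const_mul (T M)
    obtain ⟨j0, hj0⟩ := Metric.tendsto_atTop.mp hpow ε hε
    refine ⟨M + j0, fun n hn => ?_⟩
    have hn' : n = M + (n - M) := by omega
    have hj : j0 ≤ n - M := by omega
    have hb : T M * (1 / 2) ^ (n - M) ≤ ε := by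
      have := hj0 (n - M) hj
      rw [Real.dist_eq, sub_zero] at this
      calc T M * (1 / 2) ^ (n - M) ≤ |T M * (1 / 2) ^ (n - M)| := le_abs_self _
        _ ≤ ε := this.le
    calc T n = T (M + (n - M)) := by rw [← hn']
      _ ≤ max ε (T M * (1 / 2) ^ (n - M)) := claim _
      _ ≤ ε := max_le le_rfl hb
  rw [Metric.tendsto_atTop]
  intro ε hε
  obtain ⟨N, hN⟩ := main (min (ε / 2) (1 / 2)) (by positivity) (min_le_right _ _)
  refine ⟨N, fun n hn => ?_⟩
  rw [Real.dist_eq, sub_zero, abs_of_nonneg (hT0 n)]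
  have := hN n hn
  have h2 : min (ε / 2) (1 / 2) ≤ ε / 2 := min_le_left _ _
  linarith

/-- For every real β > 0, the last term dominates the trace sum asymptotically:
lim_{N→∞} [Σ_{k=0}^{N−1} Γ((2k+1)/β)] / Γ((2N−1)/β) = 1. -/
theorem gamma_sum_div_last_tendsto_one (β : ℝ) (hβ : 0 < β) :
    Tendsto (fun N : ℕ =>
        (∑ k ∈ Finset.range N, Real.Gamma ((2 * (k : ℝ) + 1) / β)) /
          Real.Gamma ((2 * (N : ℝ) - 1) / β))
      atTop (nhds 1) := by
  set c : ℝ := 2 / β with hcdef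
  have hc : 0 < c := by positivity
  set a : ℕ → ℝ := fun k => Real.Gamma ((2 * (k : ℝ) + 1) / β) with hadef
  have ha : ∀ k, 0 < a k := fun k => Real.Gamma_pos_of_pos (by positivity)
  have hx : Tendsto (fun k : ℕ => (2 * (k : ℝ) + 1) / β) atTop atTop := by
    refine Tendsto.atTop_div_const hβ ?_
    exact tendsto_atTop_add_const_right _ 1
      (Tendsto.const_mul_atTop two_pos tendsto_natCast_atTop_atTop)
  have hshift : ∀ k : ℕ, (2 * ((k : ℝ) + 1) + 1) / β = (2 * (k : ℝ) + 1) / β + c := by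
    intro k
    rw [hcdef]
    ring
  have hr : Tendsto (fun k => a k / a (k + 1)) atTop (nhds 0) := by
    have hub : Tendsto (fun k : ℕ => ((2 * (k : ℝ) + 1) / β - 1) ^ (-c)) atTop (nhds 0) := by
      have h1 : Tendsto (fun k : ℕ => (2 * (k : ℝ) + 1) / β - 1) atTop atTop := by
        simpa [sub_eq_add_neg] using tendsto_atTop_add_const_right _ (-1) hx
      exact (tendsto_rpow_neg_atTop hc).comp h1
    refine tendsto_of_tendsto_of_tendsto_of_le_of_le' tendsto_const_nhds hub ?_ ?_
    · exact Eventually.of_forall fun k => div_nonneg (ha k).le (ha (k + 1)).le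
    · filter_upwards [hx.eventually_ge_atTop 2] with k hk
      set x : ℝ := (2 * (k : ℝ) + 1) / β with hxdef
      have hx1 : (0:ℝ) < x - 1 := by linarith
      have hak1 : a (k + 1) = Real.Gamma (x + c) := by
        simp only [hadef]
        push_cast
        rw [hshift k]
      have hlb := aux_gamma_lb hc hk
      have hpowpos : (0:ℝ) < (x - 1) ^ c := Real.rpow_pos_of_pos hx1 c
      have hdpos : (0:ℝ) < a k * (x - 1) ^ c := mul_pos (ha k) hpowpos
      have h2 : a k / a (k + 1) ≤ a k / (a k * (x - 1) ^ c) := by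
        rw [hak1]
        exact div_le_div_of_nonneg_left (ha k).le hdpos hlb
      have h3 : a k / (a k * (x - 1) ^ c) = (x - 1) ^ (-c) := by
        rw [Real.rpow_neg hx1.le]
        field_simp
        exact div_self (ha k).ne'
      rw [h3] at h2
      exact h2
  have hT := aux_sum_div_tendsto ha hr
  have h1 : Tendsto (fun m : ℕ => (∑ k ∈ Finset.range m, a k) / a m + 1)
      atTop (nhds 1) := by
    simpa using hT.add (tendsto_const_nhds (x := (1:ℝ)))
  have h2 := h1.comp (tendsto_sub_atTop_nat 1)
  refine h2.congr' ?_
  filter_upwards [eventually_ge_atTop 1] with N hN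
  obtain ⟨m, rfl⟩ : ∃ m, N = m + 1 := ⟨N - 1, by omega⟩
  simp only [Function.comp_apply, Nat.add_sub_cancel]
  have hgam : Real.Gamma ((2 * ((m : ℝ) + 1) - 1) / β) = a m := by
    simp only [hadef]
    norm_num
    ring_nf
  push_cast
  rw [hgam, Finset.sum_range_succ, add_div, div_self (ha m).ne']
end

section
/- For every real β > 0, the largest eigenvalue λ_N of the Hankel matrix H_N satisfies λ_N ≃ (1/β)·Γ((2N−1)/β) as N → ∞, i.e. lim_{N→∞} β·λ_N / Γ((2N−1)/β) = 1. -/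
open Filter

section AuxGamma

/-- Gamma functional equation iterated. -/
lemma aux_Gamma_add_nat (y : ℝ) (hy : 0 < y) (k : ℕ) :
    Real.Gamma (y + k) = Real.Gamma y * ∏ m ∈ Finset.range k, (y + m) := by
  induction k with
  | zero => simp
  | succ k ih =>
      have h1 : y + ((k + 1 : ℕ) : ℝ) = (y + k) + 1 := by push_cast; ring
      have h2 : y + (k : ℝ) ≠ 0 := by positivity
      rw [h1, Real.Gamma_add_one h2, ih, Finset.prod_range_succ]
      ring

/-- Interpolation bound from log-convexity of Gamma. -/
lemma aux_Gamma_interp (x r : ℝ) (hx : 1 ≤ x) (hr : 0 ≤ r) (hr1 : r < 1) :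
    x * Real.Gamma x ≤ Real.Gamma (x + r) * (x + r) ^ (1 - r) := by
  have hx0 : (0 : ℝ) < x := lt_of_lt_of_le one_pos hx
  have hxr : (0 : ℝ) < x + r := by linarith
  have hxr1 : (0 : ℝ) < x + r + 1 := by linarith
  have hG1 : (0 : ℝ) < Real.Gamma (x + r) := Real.Gamma_pos_of_pos hxr
  have hG2 : (0 : ℝ) < Real.Gamma (x + r + 1) := Real.Gamma_pos_of_pos hxr1
  have hconv := Real.convexOn_log_Gamma.2 (Set.mem_Ioi.mpr hxr) (Set.mem_Ioi.mpr hxr1)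
    hr (by linarith : (0:ℝ) ≤ 1 - r) (by ring)
  have hpt : r • (x + r) + (1 - r) • (x + r + 1) = x + 1 := by
    simp only [smul_eq_mul]; ring
  rw [hpt] at hconv
  simp only [Function.comp_apply, smul_eq_mul] at hconv
  have hfe : Real.Gamma (x + r + 1) = (x + r) * Real.Gamma (x + r) :=
    Real.Gamma_add_one hxr.ne'
  rw [hfe, Real.log_mul hxr.ne' hG1.ne'] at hconv
  have hconv' : Real.log (Real.Gamma (x + 1)) ≤
      Real.log (Real.Gamma (x + r)) + (1 - r) * Real.log (x + r) := by nlinarith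
  have hGx1 : (0 : ℝ) < Real.Gamma (x + 1) := Real.Gamma_pos_of_pos (by linarith)
  have hfe2 : Real.Gamma (x + 1) = x * Real.Gamma x := Real.Gamma_add_one hx0.ne'
  calc x * Real.Gamma x = Real.Gamma (x + 1) := hfe2.symm
    _ = Real.exp (Real.log (Real.Gamma (x + 1))) := (Real.exp_log hGx1).symm
    _ ≤ Real.exp (Real.log (Real.Gamma (x + r)) + (1 - r) * Real.log (x + r)) :=
        Real.exp_le_exp.mpr hconv'
    _ = Real.Gamma (x + r) * (x + r) ^ (1 - r) := by
        rw [Real.exp_add, Real.exp_log hG1, mul_comm (1 - r) (Real.log (x + r)),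
          ← Real.rpow_def_of_pos hxr]

/-- Key growth bound: `Γ(x) x^a ≤ 2 Γ(x+a)` for `x ≥ 1`. -/
lemma aux_Gamma_ratio_bound (a : ℝ) (ha : 0 < a) (x : ℝ) (hx : 1 ≤ x) :
    Real.Gamma x * x ^ a ≤ 2 * Real.Gamma (x + a) := by
  have hx0 : (0 : ℝ) < x := lt_of_lt_of_le one_pos hx
  set k : ℕ := ⌊a⌋₊ with hk
  set r : ℝ := a - k with hrdef
  have hr : 0 ≤ r := by
    have := Nat.floor_le ha.le
    simp only [hrdef]; linarith
  have hr1 : r < 1 := by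
    have := Nat.lt_floor_add_one a
    simp only [hrdef]; linarith
  have hxr : (0 : ℝ) < x + r := by linarith
  have hGx : (0 : ℝ) < Real.Gamma x := Real.Gamma_pos_of_pos hx0
  have hGxr : (0 : ℝ) < Real.Gamma (x + r) := Real.Gamma_pos_of_pos hxr
  -- Γ(x+a) = Γ(x+r) * ∏_{m<k} (x+r+m)
  have hsplit : Real.Gamma (x + a) =
      Real.Gamma (x + r) * ∏ m ∈ Finset.range k, (x + r + m) := by
    have : x + a = (x + r) + k := by simp only [hrdef]; ring
    rw [this, aux_Gamma_add_nat _ hxr]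
  -- ∏_{m<k} (x+r+m) ≥ x^k
  have hprod : (x : ℝ) ^ (k : ℕ) ≤ ∏ m ∈ Finset.range k, (x + r + m) := by
    have hx' : (x : ℝ) ^ (k : ℕ) = ∏ _m ∈ Finset.range k, x := by
      rw [Finset.prod_const, Finset.card_range]
    rw [hx']
    apply Finset.prod_le_prod
    · intro m _; positivity
    · intro m _; have : (0:ℝ) ≤ (m:ℝ) := Nat.cast_nonneg m; linarith
  -- Γ(x+r) ≥ Γ(x) x^r / 2
  have hinterp := aux_Gamma_interp x r hx hr hr1
  have hpow1 : (x + r) ^ (1 - r) ≤ 2 * x ^ (1 - r) := by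
    have h2x : x + r ≤ 2 * x := by linarith
    calc (x + r) ^ (1 - r) ≤ (2 * x) ^ (1 - r) :=
          Real.rpow_le_rpow hxr.le h2x (by linarith)
      _ = 2 ^ (1 - r) * x ^ (1 - r) := Real.mul_rpow (by norm_num) hx0.le
      _ ≤ 2 * x ^ (1 - r) := by
          have h1 : (2:ℝ) ^ (1 - r) ≤ 2 ^ (1:ℝ) :=
            Real.rpow_le_rpow_of_exponent_le (by norm_num) (by linarith)
          have h2 : (0:ℝ) ≤ x ^ (1 - r) := Real.rpow_nonneg hx0.le _
          have h3 : (2:ℝ) ^ (1:ℝ) = 2 := Real.rpow_one 2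
          nlinarith
  have hGxr_lb : Real.Gamma x * x ^ r ≤ 2 * Real.Gamma (x + r) := by
    -- from x Γ(x) ≤ Γ(x+r) (x+r)^{1-r} ≤ Γ(x+r) 2 x^{1-r}
    have h1 : x * Real.Gamma x ≤ Real.Gamma (x + r) * (2 * x ^ (1 - r)) :=
      le_trans hinterp (by nlinarith [hGxr.le])
    have hxsplit : x = x ^ r * x ^ (1 - r) := by
      rw [← Real.rpow_add hx0, add_sub_cancel, Real.rpow_one]
    have hxpow_pos : (0:ℝ) < x ^ (1 - r) := Real.rpow_pos_of_pos hx0 _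
    rw [hxsplit] at h1
    have := (fun h => le_of_mul_le_mul_right h hxpow_pos) (by nlinarith : (Real.Gamma x * x ^ r) * x ^ (1-r) ≤ (2 * Real.Gamma (x + r)) * x ^ (1-r))
    exact this
  -- combine
  have hxa : x ^ a = x ^ r * x ^ (k:ℕ) := by
    rw [← Real.rpow_natCast x k, ← Real.rpow_add hx0]
    congr 1
    simp only [hrdef]; ring
  rw [hsplit, hxa]
  have hxk_pos : (0:ℝ) < x ^ (k:ℕ) := pow_pos hx0 k
  calc Real.Gamma x * (x ^ r * x ^ (k:ℕ))
      = (Real.Gamma x * x ^ r) * x ^ (k:ℕ) := by ring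
    _ ≤ (2 * Real.Gamma (x + r)) * x ^ (k:ℕ) := by
        apply mul_le_mul_of_nonneg_right hGxr_lb hxk_pos.le
    _ ≤ (2 * Real.Gamma (x + r)) * ∏ m ∈ Finset.range k, (x + r + m) := by
        apply mul_le_mul_of_nonneg_left hprod (by positivity)
    _ = 2 * (Real.Gamma (x + r) * ∏ m ∈ Finset.range k, (x + r + m)) := by ring

/-- Eventually the consecutive ratio of `Γ(s/β)` is below `ε`. -/
lemma aux_ratio_small (β ε : ℝ) (hβ : 0 < β) (hε : 0 < ε) :
    ∃ s₀ : ℕ, 1 ≤ s₀ ∧ ∀ s : ℕ, s₀ ≤ s →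
      Real.Gamma ((s : ℝ) / β) ≤ ε * Real.Gamma (((s : ℝ) + 1) / β) := by
  have ha : (0:ℝ) < 1 / β := by positivity
  -- (s/β)^(1/β) → ∞
  have hdiv : Tendsto (fun s : ℕ => (s : ℝ) / β) atTop atTop :=
    (tendsto_natCast_atTop_atTop (R := ℝ)).atTop_div_const hβ
  have hpow : Tendsto (fun s : ℕ => ((s : ℝ) / β) ^ (1/β : ℝ)) atTop atTop :=
    (tendsto_rpow_atTop ha).comp hdiv
  have hev : ∀ᶠ s : ℕ in atTop,
      (1 : ℝ) ≤ (s : ℝ) / β ∧ 2 / ε ≤ ((s : ℝ) / β) ^ (1/β : ℝ) :=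
    (hdiv.eventually_ge_atTop 1).and (hpow.eventually_ge_atTop (2/ε))
  obtain ⟨s₁, hs₁⟩ := eventually_atTop.mp hev
  refine ⟨max s₁ 1, le_max_right _ _, fun s hs => ?_⟩
  obtain ⟨hx1, hx2⟩ := hs₁ s (le_trans (le_max_left _ _) hs)
  set x : ℝ := (s : ℝ) / β with hxdef
  have hkey := aux_Gamma_ratio_bound (1/β) ha x hx1
  have hx0 : (0:ℝ) < x := lt_of_lt_of_le one_pos hx1
  have hxpow_pos : (0:ℝ) < x ^ (1/β : ℝ) := Real.rpow_pos_of_pos hx0 _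
  have harg : x + 1/β = ((s : ℝ) + 1) / β := by
    rw [hxdef]; field_simp
  have hGpos : (0:ℝ) < Real.Gamma (x + 1/β) := Real.Gamma_pos_of_pos (by positivity)
  -- Γ(x) ≤ 2 Γ(x+1/β) / x^{1/β} ≤ ε Γ(x+1/β)
  have h2 : Real.Gamma x * x ^ (1/β : ℝ) ≤ ε * x ^ (1/β : ℝ) * Real.Gamma (x + 1/β) := by
    have hx2' : 2 ≤ ε * x ^ (1/β : ℝ) := by
      rw [div_le_iff₀ hε] at hx2; linarith [hx2]
    nlinarith [hGpos]
  have h3 : Real.Gamma x ≤ ε * Real.Gamma (x + 1/β) := by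
    have := (fun h => le_of_mul_le_mul_right h hxpow_pos)
      (by nlinarith : Real.Gamma x * x ^ (1/β : ℝ) ≤ (ε * Real.Gamma (x + 1/β)) * x ^ (1/β : ℝ))
    exact this
  rw [harg] at h3
  exact h3

/-- Geometric-type bound on the partial sums, by induction. -/
lemma aux_sum_bound (β ε : ℝ) (hβ : 0 < β) (hε : 0 < ε) (hε2 : ε ≤ 1/2) (s₀ : ℕ)
    (hs₀ : 1 ≤ s₀)
    (hrat : ∀ s : ℕ, s₀ ≤ s →
      Real.Gamma ((s : ℝ) / β) ≤ ε * Real.Gamma (((s : ℝ) + 1) / β)) :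
    ∀ M : ℕ, s₀ ≤ M →
      (∑ s ∈ Finset.Ico s₀ M, Real.Gamma ((s : ℝ) / β)) ≤
        2 * ε * Real.Gamma ((M : ℝ) / β) := by
  intro M hM
  induction M, hM using Nat.le_induction with
  | base =>
      simp only [Finset.Ico_self, Finset.sum_empty]
      have : (0:ℝ) < Real.Gamma ((s₀ : ℝ) / β) := by
        apply Real.Gamma_pos_of_pos
        have : (1:ℝ) ≤ (s₀:ℝ) := by exact_mod_cast hs₀
        positivity
      positivity
  | succ M hM ih =>
      rw [Finset.sum_Ico_succ_top hM]
      have h1 := hrat M hM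
      have hcast : ((M + 1 : ℕ) : ℝ) = (M : ℝ) + 1 := by push_cast; ring
      rw [hcast]
      have hG1 : (0:ℝ) < Real.Gamma (((M:ℝ) + 1) / β) := by
        apply Real.Gamma_pos_of_pos
        have : (0:ℝ) ≤ (M:ℝ) := Nat.cast_nonneg M
        positivity
      have hh1 : 2 * ε * Real.Gamma ((M:ℝ) / β) ≤
          2 * ε * (ε * Real.Gamma (((M:ℝ) + 1) / β)) :=
        mul_le_mul_of_nonneg_left h1 (by linarith)
      have hh2 : (0:ℝ) ≤ ε * (1 - 2 * ε) * Real.Gamma (((M:ℝ) + 1) / β) := by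
        apply mul_nonneg (mul_nonneg hε.le (by linarith)) hG1.le
      nlinarith [ih]

/-- Gamma values grow at least geometrically. -/
lemma aux_growth (β ε : ℝ) (hβ : 0 < β) (hε : 0 < ε) (hε2 : ε ≤ 1/2) (s₀ : ℕ)
    (hs₀ : 1 ≤ s₀)
    (hrat : ∀ s : ℕ, s₀ ≤ s →
      Real.Gamma ((s : ℝ) / β) ≤ ε * Real.Gamma (((s : ℝ) + 1) / β)) :
    ∀ M : ℕ, s₀ ≤ M →
      (2 : ℝ) ^ (M - s₀) * Real.Gamma ((s₀ : ℝ) / β) ≤ Real.Gamma ((M : ℝ) / β) := by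
  intro M hM
  induction M, hM using Nat.le_induction with
  | base => simp
  | succ M hM ih =>
      have h1 := hrat M hM
      have hsub : M + 1 - s₀ = (M - s₀) + 1 := by omega
      rw [hsub, pow_succ]
      have hcast : ((M + 1 : ℕ) : ℝ) = (M : ℝ) + 1 := by push_cast; ring
      rw [hcast]
      have hG1 : (0:ℝ) < Real.Gamma (((M:ℝ) + 1) / β) := by
        apply Real.Gamma_pos_of_pos
        have : (0:ℝ) ≤ (M:ℝ) := Nat.cast_nonneg M
        positivity
      have h2 : Real.Gamma ((M : ℝ) / β) ≤ Real.Gamma (((M:ℝ) + 1) / β) / 2 := by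
        nlinarith
      nlinarith [pow_pos (by norm_num : (0:ℝ) < 2) (M - s₀)]

/-- The sum of all earlier Gamma values is negligible compared to the top one. -/
lemma aux_sum_div_tendsto_s6 (β : ℝ) (hβ : 0 < β) :
    Tendsto (fun M : ℕ =>
        (∑ s ∈ Finset.Ico 1 M, Real.Gamma ((s : ℝ) / β)) / Real.Gamma ((M : ℝ) / β))
      atTop (nhds 0) := by
  have hGpos : ∀ s : ℕ, 1 ≤ s → (0:ℝ) < Real.Gamma ((s : ℝ) / β) := by
    intro s hs
    apply Real.Gamma_pos_of_pos
    have : (1:ℝ) ≤ (s:ℝ) := by exact_mod_cast hs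
    positivity
  rw [Metric.tendsto_atTop]
  intro ε' hε'
  set ε : ℝ := min (ε'/4) (1/2) with hεdef
  have hε : 0 < ε := lt_min (by linarith) (by norm_num)
  have hε2 : ε ≤ 1/2 := min_le_right _ _
  have hε4 : ε ≤ ε'/4 := min_le_left _ _
  obtain ⟨s₀, hs₀, hrat⟩ := aux_ratio_small β ε hβ hε
  set C : ℝ := ∑ s ∈ Finset.Ico 1 s₀, Real.Gamma ((s : ℝ) / β) with hCdef
  -- G(M) → ∞ (geometric growth), so eventually C / G(M) ≤ ε
  have hgrow := aux_growth β ε hβ hε hε2 s₀ hs₀ hrat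
  have hgeom : Tendsto (fun M : ℕ => (2:ℝ) ^ (M - s₀) * Real.Gamma ((s₀ : ℝ) / β))
      atTop atTop := by
    apply Tendsto.atTop_mul_const (hGpos s₀ hs₀)
    exact (tendsto_pow_atTop_atTop_of_one_lt (by norm_num : (1:ℝ) < 2)).comp
      (tendsto_sub_atTop_nat s₀)
  obtain ⟨M₁, hM₁⟩ := eventually_atTop.mp (hgeom.eventually_ge_atTop (C / ε))
  refine ⟨max M₁ s₀, fun M hM => ?_⟩
  have hMs₀ : s₀ ≤ M := le_trans (le_max_right _ _) hM
  have hMM₁ : M₁ ≤ M := le_trans (le_max_left _ _) hM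
  have hM1 : 1 ≤ M := le_trans hs₀ hMs₀
  have hGM : (0:ℝ) < Real.Gamma ((M : ℝ) / β) := hGpos M hM1
  have hGM_lb : C / ε ≤ Real.Gamma ((M : ℝ) / β) :=
    le_trans (hM₁ M hMM₁) (hgrow M hMs₀)
  have hhead : C ≤ ε * Real.Gamma ((M : ℝ) / β) := by
    rw [div_le_iff₀ hε] at hGM_lb; linarith
  have htail := aux_sum_bound β ε hβ hε hε2 s₀ hs₀ hrat M hMs₀
  have hsplit : (∑ s ∈ Finset.Ico 1 M, Real.Gamma ((s : ℝ) / β)) =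
      C + ∑ s ∈ Finset.Ico s₀ M, Real.Gamma ((s : ℝ) / β) := by
    rw [hCdef, Finset.sum_Ico_consecutive _ hs₀ hMs₀]
  have hsum_nonneg : (0:ℝ) ≤ ∑ s ∈ Finset.Ico 1 M, Real.Gamma ((s : ℝ) / β) := by
    apply Finset.sum_nonneg
    intro s hs
    exact (hGpos s (Finset.mem_Ico.mp hs).1).le
  have hsum_ub : (∑ s ∈ Finset.Ico 1 M, Real.Gamma ((s : ℝ) / β)) ≤
      3 * ε * Real.Gamma ((M : ℝ) / β) := by
    rw [hsplit]; linarith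
  rw [Real.dist_eq, sub_zero, abs_of_nonneg (by positivity)]
  rw [div_lt_iff₀ hGM]
  nlinarith

end AuxGamma

section AuxSpectral

/-- Each diagonal entry of a symmetric real matrix is at most any upper bound
of its eigenvalues. -/
lemma aux_diag_le {N : ℕ} (A : Matrix (Fin N) (Fin N) ℝ) (hA : A.IsHermitian)
    (lam : ℝ)
    (h : ∀ (μ : ℝ) (v : Fin N → ℝ), v ≠ 0 → A.mulVec v = μ • v → μ ≤ lam)
    (i : Fin N) : A i i ≤ lam := by
  classical
  have hev : ∀ j, hA.eigenvalues j ≤ lam := by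
    intro j
    apply h _ _ _ (hA.mulVec_eigenvectorBasis j)
    intro h0
    apply hA.eigenvectorBasis.orthonormal.ne_zero j
    apply (WithLp.equiv 2 _).symm.injective
    simpa using congrArg (WithLp.equiv 2 _).symm h0
  set U : Matrix (Fin N) (Fin N) ℝ := (hA.eigenvectorUnitary : Matrix (Fin N) (Fin N) ℝ)
    with hUdef
  have hU : U * star U = 1 := Matrix.mem_unitaryGroup_iff.mp hA.eigenvectorUnitary.2
  have hUrow : ∑ k, U i k * U i k = 1 := by
    have h' : (U * star U) i i = (1 : Matrix (Fin N) (Fin N) ℝ) i i := by rw [hU]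
    simpa [Matrix.mul_apply, Matrix.one_apply, Matrix.star_apply] using h'
  have hdiag : A i i = ∑ k, hA.eigenvalues k * (U i k * U i k) := by
    conv_lhs => rw [hA.spectral_theorem, Unitary.conjStarAlgAut_apply]
    rw [Matrix.mul_apply]
    apply Finset.sum_congr rfl
    intro k _
    rw [Matrix.mul_diagonal]
    simp only [Matrix.star_apply, star_trivial, Function.comp_apply,
      RCLike.ofReal_real_eq_id, id_eq, hUdef]
    ring
  rw [hdiag]
  calc ∑ k, hA.eigenvalues k * (U i k * U i k)
      ≤ ∑ k, lam * (U i k * U i k) := by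
        apply Finset.sum_le_sum
        intro k _
        apply mul_le_mul_of_nonneg_right (hev k) (mul_self_nonneg _)
    _ = lam := by rw [← Finset.mul_sum, hUrow, mul_one]

end AuxSpectral

/-- For every real β > 0, the largest eigenvalue λ_N of the Hankel matrix
H_N = ((1/β)Γ((i+j+1)/β))_{i,j=0}^{N−1} satisfies λ_N ≃ (1/β)·Γ((2N−1)/β)
as N → ∞, i.e. lim_{N→∞} β·λ_N / Γ((2N−1)/β) = 1. -/
theorem hankel_largest_eigenvalue_asymptotics (β : ℝ) (hβ : 0 < β) (lam : ℕ → ℝ)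
    (hlam : ∀ N : ℕ, 1 ≤ N →
      (∃ v : Fin N → ℝ, v ≠ 0 ∧
        (Matrix.of fun i j : Fin N =>
            (1 / β) * Real.Gamma ((((i : ℕ) : ℝ) + ((j : ℕ) : ℝ) + 1) / β)).mulVec v
          = lam N • v) ∧
      (∀ (μ : ℝ) (v : Fin N → ℝ), v ≠ 0 →
        (Matrix.of fun i j : Fin N =>
            (1 / β) * Real.Gamma ((((i : ℕ) : ℝ) + ((j : ℕ) : ℝ) + 1) / β)).mulVec v
          = μ • v → μ ≤ lam N)) :
    Tendsto (fun N : ℕ => β * lam N / Real.Gamma ((2 * (N : ℝ) - 1) / β))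
      atTop (nhds 1) := by
  have hGpos : ∀ x : ℝ, 0 < x → 0 < Real.Gamma (x / β) := fun x hx =>
    Real.Gamma_pos_of_pos (by positivity)
  -- lower bound: for N ≥ 1, Γ((2N-1)/β)/β ≤ lam N
  have hlow : ∀ N : ℕ, 1 ≤ N →
      (1 / β) * Real.Gamma ((2 * (N : ℝ) - 1) / β) ≤ lam N := by
    intro N hN
    set A : Matrix (Fin N) (Fin N) ℝ := Matrix.of fun i j : Fin N =>
      (1 / β) * Real.Gamma ((((i : ℕ) : ℝ) + ((j : ℕ) : ℝ) + 1) / β) with hAdef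
    have hherm : A.IsHermitian := by
      apply Matrix.IsHermitian.ext
      intro i j
      simp only [hAdef, Matrix.of_apply, star_trivial]
      ring_nf
    have hbound := (hlam N hN).2
    have hdle := aux_diag_le A hherm (lam N) hbound ⟨N - 1, by omega⟩
    have hidx : ((⟨N - 1, by omega⟩ : Fin N) : ℕ) = N - 1 := rfl
    have hcast : (((N - 1 : ℕ) : ℝ) + ((N - 1 : ℕ) : ℝ) + 1) = 2 * (N : ℝ) - 1 := by
      have h1 : ((N - 1 : ℕ) : ℝ) = (N : ℝ) - 1 := by
        have : (1:ℕ) ≤ N := hN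
        push_cast [this]; ring
      rw [h1]; ring
    simpa only [hAdef, Matrix.of_apply, hidx, hcast] using hdle
  -- upper bound: for N ≥ 1, lam N ≤ (1/β) * ∑_{s ∈ Ico 1 (2N)} Γ(s/β)
  have hupp : ∀ N : ℕ, 1 ≤ N →
      lam N ≤ (1 / β) * ∑ s ∈ Finset.Ico 1 (2 * N), Real.Gamma ((s : ℝ) / β) := by
    intro N hN
    obtain ⟨⟨v, hv0, hveq⟩, _⟩ := hlam N hN
    -- pick index with maximal |v i|
    obtain ⟨i₀, -, hmax⟩ := Finset.exists_max_image (Finset.univ : Finset (Fin N))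
      (fun i => |v i|) ⟨⟨0, by omega⟩, Finset.mem_univ _⟩
    have hmax' : ∀ j : Fin N, |v j| ≤ |v i₀| := fun j => hmax j (Finset.mem_univ j)
    have hvpos : 0 < |v i₀| := by
      rcases lt_or_eq_of_le (abs_nonneg (v i₀)) with h | h
      · exact h
      · exfalso; apply hv0; funext j
        have := hmax' j
        rw [← h] at this
        simpa using le_antisymm this (abs_nonneg _)
    have hrow := congrFun hveq i₀
    simp only [Matrix.mulVec, Matrix.of_apply, dotProduct, Pi.smul_apply,
      smul_eq_mul] at hrow
    -- |lam N| * |v i₀| ≤ (row sum) * |v i₀|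
    have hentry_pos : ∀ j : Fin N,
        0 < (1 / β) * Real.Gamma ((((i₀ : ℕ) : ℝ) + ((j : ℕ) : ℝ) + 1) / β) := by
      intro j
      have : (0:ℝ) < ((i₀ : ℕ) : ℝ) + ((j : ℕ) : ℝ) + 1 := by positivity
      have := hGpos _ this
      positivity
    have habs : |lam N| * |v i₀| ≤
        (∑ j : Fin N, (1 / β) *
          Real.Gamma ((((i₀ : ℕ) : ℝ) + ((j : ℕ) : ℝ) + 1) / β)) * |v i₀| := by
      rw [← abs_mul, ← hrow, Finset.sum_mul]
      calc |∑ j : Fin N, (1 / β) *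
            Real.Gamma ((((i₀ : ℕ) : ℝ) + ((j : ℕ) : ℝ) + 1) / β) * v j|
          ≤ ∑ j : Fin N, |(1 / β) *
            Real.Gamma ((((i₀ : ℕ) : ℝ) + ((j : ℕ) : ℝ) + 1) / β) * v j| :=
            Finset.abs_sum_le_sum_abs _ _
        _ ≤ ∑ j : Fin N, (1 / β) *
            Real.Gamma ((((i₀ : ℕ) : ℝ) + ((j : ℕ) : ℝ) + 1) / β) * |v i₀| := by
            apply Finset.sum_le_sum
            intro j _
            rw [abs_mul, abs_of_pos (hentry_pos j)]
            exact mul_le_mul_of_nonneg_left (hmax' j) (hentry_pos j).le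
    have hlam_le : lam N ≤
        ∑ j : Fin N, (1 / β) *
          Real.Gamma ((((i₀ : ℕ) : ℝ) + ((j : ℕ) : ℝ) + 1) / β) := by
      have h1 : |lam N| ≤ ∑ j : Fin N, (1 / β) *
          Real.Gamma ((((i₀ : ℕ) : ℝ) + ((j : ℕ) : ℝ) + 1) / β) :=
        le_of_mul_le_mul_right (by linarith [habs]) hvpos
      exact le_trans (le_abs_self _) h1
    -- rewrite the row sum as a sum over an interval of naturals
    have hrow_sum : (∑ j : Fin N, (1 / β) *
        Real.Gamma ((((i₀ : ℕ) : ℝ) + ((j : ℕ) : ℝ) + 1) / β)) =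
        ∑ s ∈ Finset.Ico ((i₀ : ℕ) + 1) ((i₀ : ℕ) + 1 + N),
          (1 / β) * Real.Gamma ((s : ℝ) / β) := by
      rw [Finset.sum_Ico_eq_sum_range]
      simp only [Nat.add_sub_cancel_left]
      rw [Fin.sum_univ_eq_sum_range
        (fun j => (1 / β) * Real.Gamma ((((i₀ : ℕ) : ℝ) + (j : ℝ) + 1) / β)) N]
      apply Finset.sum_congr rfl
      intro j _
      congr 2
      push_cast
      ring
    have hsubset : Finset.Ico ((i₀ : ℕ) + 1) ((i₀ : ℕ) + 1 + N) ⊆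
        Finset.Ico 1 (2 * N) := by
      intro s hs
      rw [Finset.mem_Ico] at hs ⊢
      have hi₀ : (i₀ : ℕ) < N := i₀.isLt
      omega
    have hmono : (∑ s ∈ Finset.Ico ((i₀ : ℕ) + 1) ((i₀ : ℕ) + 1 + N),
          (1 / β) * Real.Gamma ((s : ℝ) / β)) ≤
        ∑ s ∈ Finset.Ico 1 (2 * N), (1 / β) * Real.Gamma ((s : ℝ) / β) := by
      apply Finset.sum_le_sum_of_subset_of_nonneg hsubset
      intro s hs _
      have hs1 : 1 ≤ s := (Finset.mem_Ico.mp hs).1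
      have : (0:ℝ) < (s:ℝ) := by exact_mod_cast Nat.lt_of_lt_of_le Nat.zero_lt_one hs1
      have := hGpos _ this
      positivity
    rw [Finset.mul_sum]
    exact le_trans hlam_le (le_trans (le_of_eq hrow_sum) hmono)
  -- the upper bound sequence tends to 1
  have hcast2N : ∀ N : ℕ, 1 ≤ N → (((2 * N - 1 : ℕ) : ℝ)) = 2 * (N : ℝ) - 1 := by
    intro N hN
    have h1 : (1:ℕ) ≤ 2 * N := by omega
    push_cast [h1]
    ring
  set u : ℕ → ℝ := fun N =>
    (∑ s ∈ Finset.Ico 1 (2 * N), Real.Gamma ((s : ℝ) / β)) /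
      Real.Gamma ((2 * (N : ℝ) - 1) / β) with hudef
  have hu_tendsto : Tendsto u atTop (nhds 1) := by
    have hv := aux_sum_div_tendsto_s6 β hβ
    have hcomp : Tendsto (fun N : ℕ => 2 * N - 1) atTop atTop := by
      apply tendsto_atTop_atTop.mpr
      intro b
      exact ⟨b + 1, fun a ha => by omega⟩
    have hv2 : Tendsto (fun N : ℕ =>
        (∑ s ∈ Finset.Ico 1 (2 * N - 1), Real.Gamma ((s : ℝ) / β)) /
          Real.Gamma (((2 * N - 1 : ℕ) : ℝ) / β)) atTop (nhds 0) := hv.comp hcomp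
    have heq : ∀ᶠ N : ℕ in atTop, (fun N : ℕ =>
        (∑ s ∈ Finset.Ico 1 (2 * N - 1), Real.Gamma ((s : ℝ) / β)) /
          Real.Gamma (((2 * N - 1 : ℕ) : ℝ) / β) + 1) N = u N := by
      filter_upwards [eventually_ge_atTop 1] with N hN
      have h2N : 2 * N = (2 * N - 1) + 1 := by omega
      have hGb : (0:ℝ) < Real.Gamma ((2 * (N : ℝ) - 1) / β) := by
        apply Real.Gamma_pos_of_pos
        have : (1:ℝ) ≤ (N:ℝ) := by exact_mod_cast hN
        have h1 : (0:ℝ) < 2 * (N:ℝ) - 1 := by linarith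
        positivity
      simp only [hudef]
      rw [hcast2N N hN]
      rw [h2N, Finset.sum_Ico_succ_top (by omega : 1 ≤ 2 * N - 1)]
      rw [hcast2N N hN]
      field_simp
      rw [Nat.add_sub_cancel]
    have := (hv2.add tendsto_const_nhds).congr' heq
    simpa using this
  -- squeeze
  apply tendsto_of_tendsto_of_tendsto_of_le_of_le' tendsto_const_nhds hu_tendsto
  · filter_upwards [eventually_ge_atTop 1] with N hN
    have hGb : (0:ℝ) < Real.Gamma ((2 * (N : ℝ) - 1) / β) := by
      apply Real.Gamma_pos_of_pos
      have : (1:ℝ) ≤ (N:ℝ) := by exact_mod_cast hN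
      have h1 : (0:ℝ) < 2 * (N:ℝ) - 1 := by linarith
      positivity
    have h1 := hlow N hN
    rw [le_div_iff₀ hGb]
    have hβ' : (0:ℝ) < β := hβ
    calc (1:ℝ) * Real.Gamma ((2 * (N : ℝ) - 1) / β)
        = β * ((1/β) * Real.Gamma ((2 * (N : ℝ) - 1) / β)) := by field_simp
      _ ≤ β * lam N := by
          apply mul_le_mul_of_nonneg_left h1 hβ.le
  · filter_upwards [eventually_ge_atTop 1] with N hN
    have hGb : (0:ℝ) < Real.Gamma ((2 * (N : ℝ) - 1) / β) := by
      apply Real.Gamma_pos_of_pos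
      have : (1:ℝ) ≤ (N:ℝ) := by exact_mod_cast hN
      have h1 : (0:ℝ) < 2 * (N:ℝ) - 1 := by linarith
      positivity
    have h1 := hupp N hN
    have h2 : β * lam N ≤ ∑ s ∈ Finset.Ico 1 (2 * N), Real.Gamma ((s : ℝ) / β) := by
      calc β * lam N ≤ β * ((1 / β) * ∑ s ∈ Finset.Ico 1 (2 * N),
            Real.Gamma ((s : ℝ) / β)) := mul_le_mul_of_nonneg_left h1 hβ.le
        _ = ∑ s ∈ Finset.Ico 1 (2 * N), Real.Gamma ((s : ℝ) / β) := by field_simp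
    show β * lam N / Real.Gamma ((2 * (N : ℝ) - 1) / β) ≤
      (∑ s ∈ Finset.Ico 1 (2 * N), Real.Gamma ((s : ℝ) / β)) /
        Real.Gamma ((2 * (N : ℝ) - 1) / β)
    exact (div_le_div_iff_of_pos_right hGb).mpr h2
end

section
/- Let β > 0 and let (P_j)_{j≥0} be polynomials with real coefficients such that deg P_j = j and ∫_0^∞ P_i(x) P_j(x) e^{−x^β} dx = δ_{ij} for all i, j (the orthonormal polynomials for the weight e^{−x^β} on [0,∞)). Then the smallest eigenvalue λ_1(N) of the Hankel matrix H_N satisfies λ_1(N) ≥ 2π / Σ_{j=0}^{N} K_{jj}, where K_{jj} = ∫_{−π}^{π} P_j(−e^{iφ}) P_j(−e^{−iφ}) dφ = ∫_{−π}^{π} |P_j(−e^{iφ})|² dφ. -/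
open MeasureTheory Set Real Polynomial

section Aux
lemma mono_int {β : ℝ} (hβ : 0 < β) (m : ℕ) :
    IntegrableOn (fun x : ℝ => x ^ m * Real.exp (-(x ^ β))) (Ioi 0) := by
  have h0 : (0:ℝ) < ((m:ℝ)+1)/β := by positivity
  have hf : IntegrableOn (fun y : ℝ => Real.exp (-y) * y ^ (((m:ℝ)+1)/β - 1)) (Ioi 0) :=
    Real.GammaIntegral_convergent h0
  have := (integrableOn_Ioi_comp_rpow_iff'
    (fun y : ℝ => Real.exp (-y) * y ^ (((m:ℝ)+1)/β - 1)) hβ.ne').mpr hf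
  refine this.congr_fun (fun x hx => ?_) measurableSet_Ioi
  have hx0 : (0:ℝ) < x := hx
  have he : β - 1 + β * (((m:ℝ)+1)/β - 1) = (m:ℝ) := by field_simp; ring
  calc x ^ (β - 1) • (Real.exp (-(x ^ β)) * (x ^ β) ^ (((m:ℝ)+1)/β - 1))
      = x ^ (β - 1) * x ^ (β * (((m:ℝ)+1)/β - 1)) * Real.exp (-(x ^ β)) := by
        rw [← Real.rpow_mul hx0.le, smul_eq_mul]; ring
    _ = x ^ ((m:ℝ)) * Real.exp (-(x ^ β)) := by rw [← Real.rpow_add hx0, he]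
    _ = x ^ m * Real.exp (-(x ^ β)) := by rw [Real.rpow_natCast]

lemma poly_int {β : ℝ} (hβ : 0 < β) (R : ℝ[X]) :
    IntegrableOn (fun x : ℝ => R.eval x * Real.exp (-(x ^ β))) (Ioi 0) := by
  have : (fun x : ℝ => R.eval x * Real.exp (-(x ^ β)))
      = fun x => ∑ i ∈ Finset.range (R.natDegree + 1),
          R.coeff i * (x ^ i * Real.exp (-(x ^ β))) := by
    funext x
    rw [eval_eq_sum_range, Finset.sum_mul]
    exact Finset.sum_congr rfl fun i _ => by ring
  rw [this]
  exact integrable_finset_sum _ fun i _ => (mono_int hβ i).const_mul _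

lemma repr_lemma (P : ℕ → ℝ[X]) (hdeg : ∀ j : ℕ, (P j).degree = j) :
    ∀ (n : ℕ) (R : ℝ[X]), R.degree < (n : ℕ) →
      ∃ c : ℕ → ℝ, R = ∑ j ∈ Finset.range n, C (c j) * P j := by
  intro n
  induction n with
  | zero =>
    intro R hR
    refine ⟨0, ?_⟩
    simp only [Finset.range_zero, Finset.sum_empty]
    by_contra h
    have := Polynomial.degree_eq_natDegree h
    rw [this] at hR
    exact_mod_cast not_lt.mpr (Nat.zero_le _) (by exact_mod_cast hR)
  | succ n ih =>
    intro R hR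
    have hPn : (P n).degree = (n : ℕ) := hdeg n
    have hPne : P n ≠ 0 := fun h => by simp [h] at hPn
    have hlc : (P n).coeff n ≠ 0 := by
      have := Polynomial.coeff_ne_zero_of_eq_degree hPn
      exact this
    set a := R.coeff n / (P n).coeff n with ha
    have hdeg' : (R - C a * P n).degree < (n : ℕ) := by
      rw [Polynomial.degree_lt_iff_coeff_zero]
      intro m hm
      rw [Polynomial.coeff_sub, Polynomial.coeff_C_mul]
      rcases eq_or_lt_of_le hm with h | h
      · have hmn : m = n := h.symm
        subst hmn
        rw [ha, div_mul_cancel₀ _ hlc, sub_self]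
      · have hmn : (n:ℕ) < m := h
        have h1 : R.coeff m = 0 := by
          apply Polynomial.coeff_eq_zero_of_degree_lt
          exact lt_of_lt_of_le hR (by exact_mod_cast hmn)
        have h2 : (P n).coeff m = 0 := by
          apply Polynomial.coeff_eq_zero_of_degree_lt
          rw [hPn]; exact_mod_cast hmn
        simp [h1, h2]
    obtain ⟨c, hc⟩ := ih _ hdeg'
    refine ⟨Function.update c n a, ?_⟩
    rw [Finset.sum_range_succ, Function.update_self]
    have : ∑ j ∈ Finset.range n, C (Function.update c n a j) * P j
        = ∑ j ∈ Finset.range n, C (c j) * P j := by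
      refine Finset.sum_congr rfl fun j hj => ?_
      rw [Function.update_of_ne (Finset.mem_range.mp hj).ne]
    rw [this, ← hc]
    ring

lemma cos_int_eq (i k : ℕ) :
    ∫ φ in (-π)..π, Real.cos (((i:ℝ) - k) * φ)
      = if i = k then 2 * π else 0 := by
  rcases eq_or_ne i k with h | h
  · simp [h, two_mul]
  · have hc : ((i:ℝ) - k) ≠ 0 := by
      intro hc; apply h
      have : (i:ℝ) = k := by linarith
      exact_mod_cast this
    rw [if_neg h]
    have := intervalIntegral.integral_comp_mul_left (fun x => Real.cos x) hc (a := -π) (b := π)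
    rw [this, integral_cos, smul_eq_mul]
    have hs : ∀ n : ℤ, Real.sin ((n:ℝ) * π) = 0 := fun n => Real.sin_int_mul_pi n
    have h1 : Real.sin (((i:ℝ) - k) * π) = 0 := by
      have := hs ((i:ℤ) - k); push_cast at this; exact this
    have h2 : Real.sin (((i:ℝ) - k) * -π) = 0 := by
      have := hs (-((i:ℤ) - k)); push_cast at this
      rw [show ((i:ℝ) - k) * -π = -((i:ℝ)-k) * π by ring]
      exact this
    rw [h1, h2]; ring

lemma cs_pointwise (s : Finset ℕ) (c : ℕ → ℝ) (z : ℕ → ℂ) :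
    Complex.normSq (∑ j ∈ s, (c j : ℂ) * z j)
      ≤ (∑ j ∈ s, (c j) ^ 2) * (∑ j ∈ s, Complex.normSq (z j)) := by
  have hre : (∑ j ∈ s, (c j : ℂ) * z j).re = ∑ j ∈ s, c j * (z j).re := by
    rw [Complex.re_sum]; exact Finset.sum_congr rfl fun j _ => by simp
  have him : (∑ j ∈ s, (c j : ℂ) * z j).im = ∑ j ∈ s, c j * (z j).im := by
    rw [Complex.im_sum]; exact Finset.sum_congr rfl fun j _ => by simp
  rw [Complex.normSq_apply, hre, him]
  have h1 := Finset.sum_mul_sq_le_sq_mul_sq s c (fun j => (z j).re)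
  have h2 := Finset.sum_mul_sq_le_sq_mul_sq s c (fun j => (z j).im)
  have hsum : ∑ j ∈ s, Complex.normSq (z j)
      = (∑ j ∈ s, (z j).re ^ 2) + ∑ j ∈ s, (z j).im ^ 2 := by
    rw [← Finset.sum_add_distrib]
    exact Finset.sum_congr rfl fun j _ => by rw [Complex.normSq_apply]; ring
  rw [hsum]
  nlinarith [sq_nonneg (∑ j ∈ s, c j * (z j).re), sq_nonneg (∑ j ∈ s, c j * (z j).im)]

lemma term_eq (φ : ℝ) (a b : ℝ) (i k : ℕ) :
    (starRingEnd ℂ) ((a:ℂ) * (-Complex.exp (φ * Complex.I)) ^ i)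
        * ((b:ℂ) * (-Complex.exp (φ * Complex.I)) ^ k)
      = ((a * b * (-1:ℝ) ^ (i + k) : ℝ) : ℂ)
          * Complex.exp ((((k:ℝ) - (i:ℝ)) * φ : ℝ) * Complex.I) := by
  rw [map_mul, map_pow, map_neg, ← Complex.exp_conj]
  have hconj : (starRingEnd ℂ) ((φ:ℂ) * Complex.I) = -((φ:ℂ) * Complex.I) := by
    simp [Complex.conj_I]
  rw [hconj, Complex.conj_ofReal]
  have e1 : (-Complex.exp (-((φ:ℂ) * Complex.I))) ^ i
      = (-1:ℂ) ^ i * Complex.exp ((i:ℂ) * -((φ:ℂ) * Complex.I)) := by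
    rw [neg_pow, ← Complex.exp_nat_mul]
  have e2 : (-Complex.exp ((φ:ℂ) * Complex.I)) ^ k
      = (-1:ℂ) ^ k * Complex.exp ((k:ℂ) * ((φ:ℂ) * Complex.I)) := by
    rw [neg_pow, ← Complex.exp_nat_mul]
  rw [e1, e2]
  have e3 : Complex.exp ((i:ℂ) * -((φ:ℂ) * Complex.I))
        * Complex.exp ((k:ℂ) * ((φ:ℂ) * Complex.I))
      = Complex.exp ((((k:ℝ) - (i:ℝ)) * φ : ℝ) * Complex.I) := by
    rw [← Complex.exp_add]; congr 1; push_cast; ring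
  calc (a:ℂ) * ((-1:ℂ) ^ i * Complex.exp ((i:ℂ) * -((φ:ℂ) * Complex.I)))
        * ((b:ℂ) * ((-1:ℂ) ^ k * Complex.exp ((k:ℂ) * ((φ:ℂ) * Complex.I))))
      = ((a:ℂ) * b * ((-1:ℂ) ^ i * (-1:ℂ) ^ k))
          * (Complex.exp ((i:ℂ) * -((φ:ℂ) * Complex.I))
              * Complex.exp ((k:ℂ) * ((φ:ℂ) * Complex.I))) := by ring
    _ = ((a * b * (-1:ℝ) ^ (i + k) : ℝ) : ℂ)
          * Complex.exp ((((k:ℝ) - (i:ℝ)) * φ : ℝ) * Complex.I) := by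
        rw [e3, ← pow_add]; push_cast; ring

set_option maxHeartbeats 1000000 in
lemma parseval (N : ℕ) (v : Fin N → ℝ) :
    ∫ φ in (-π)..π,
        Complex.normSq (∑ i : Fin N, (v i : ℂ) * (-Complex.exp (φ * Complex.I)) ^ (i:ℕ))
      = 2 * π * ∑ i : Fin N, (v i) ^ 2 := by
  have hpt : ∀ φ : ℝ,
      Complex.normSq (∑ i : Fin N, (v i : ℂ) * (-Complex.exp (φ * Complex.I)) ^ (i:ℕ))
        = ∑ i : Fin N, ∑ k : Fin N,
            v i * v k * (-1:ℝ) ^ ((i:ℕ) + (k:ℕ)) * Real.cos (((k:ℝ) - (i:ℝ)) * φ) := by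
    intro φ
    have h2 : Complex.normSq (∑ i : Fin N, (v i : ℂ) * (-Complex.exp (φ * Complex.I)) ^ (i:ℕ))
        = ((starRingEnd ℂ) (∑ i : Fin N, (v i : ℂ) * (-Complex.exp (φ * Complex.I)) ^ (i:ℕ))
            * (∑ i : Fin N, (v i : ℂ) * (-Complex.exp (φ * Complex.I)) ^ (i:ℕ))).re := by
      rw [← Complex.normSq_eq_conj_mul_self, Complex.ofReal_re]
    rw [h2, map_sum, Finset.sum_mul_sum, Complex.re_sum]
    refine Finset.sum_congr rfl fun i _ => ?_
    rw [Complex.re_sum]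
    refine Finset.sum_congr rfl fun k _ => ?_
    rw [term_eq, Complex.re_ofReal_mul, Complex.exp_ofReal_mul_I_re]
  have hint : ∀ i k : Fin N, IntervalIntegrable
      (fun φ => v i * v k * (-1:ℝ) ^ ((i:ℕ) + (k:ℕ)) * Real.cos (((k:ℝ) - (i:ℝ)) * φ))
      volume (-π) π :=
    fun i k => (Continuous.intervalIntegrable ((continuous_const.mul (Real.continuous_cos.comp (continuous_const.mul continuous_id)))) _ _)
  calc ∫ φ in (-π)..π,
        Complex.normSq (∑ i : Fin N, (v i : ℂ) * (-Complex.exp (φ * Complex.I)) ^ (i:ℕ))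
      = ∫ φ in (-π)..π, ∑ i : Fin N, ∑ k : Fin N,
            v i * v k * (-1:ℝ) ^ ((i:ℕ) + (k:ℕ)) * Real.cos (((k:ℝ) - (i:ℝ)) * φ) := by
        simp_rw [hpt]
    _ = ∑ i : Fin N, ∫ φ in (-π)..π, ∑ k : Fin N,
            v i * v k * (-1:ℝ) ^ ((i:ℕ) + (k:ℕ)) * Real.cos (((k:ℝ) - (i:ℝ)) * φ) := by
        refine intervalIntegral.integral_finset_sum
          (f := fun (i : Fin N) (φ : ℝ) => ∑ k : Fin N,
            v i * v k * (-1:ℝ) ^ ((i:ℕ) + (k:ℕ)) * Real.cos (((k:ℝ) - (i:ℝ)) * φ))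
          (fun i _ => ?_)
        simpa only [Finset.sum_fn] using IntervalIntegrable.sum (μ := volume)
          (f := fun (k : Fin N) (φ : ℝ) =>
            v i * v k * (-1:ℝ) ^ ((i:ℕ) + (k:ℕ)) * Real.cos (((k:ℝ) - (i:ℝ)) * φ))
          Finset.univ (fun k _ => hint i k)
    _ = ∑ i : Fin N, ∑ k : Fin N, ∫ φ in (-π)..π,
            v i * v k * (-1:ℝ) ^ ((i:ℕ) + (k:ℕ)) * Real.cos (((k:ℝ) - (i:ℝ)) * φ) := by
        exact Finset.sum_congr rfl fun i _ =>
          intervalIntegral.integral_finset_sum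
            (f := fun (k : Fin N) (φ : ℝ) =>
              v i * v k * (-1:ℝ) ^ ((i:ℕ) + (k:ℕ)) * Real.cos (((k:ℝ) - (i:ℝ)) * φ))
            (fun k _ => hint i k)
    _ = ∑ i : Fin N, ∑ k : Fin N,
            v i * v k * (-1:ℝ) ^ ((i:ℕ) + (k:ℕ)) * (if (k:ℕ) = (i:ℕ) then 2 * π else 0) := by
        refine Finset.sum_congr rfl fun i _ => Finset.sum_congr rfl fun k _ => ?_
        rw [intervalIntegral.integral_const_mul, cos_int_eq]
    _ = ∑ i : Fin N, (v i) ^ 2 * (2 * π) := by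
        refine Finset.sum_congr rfl fun i _ => ?_
        rw [Finset.sum_eq_single i]
        · have : (-1:ℝ) ^ ((i:ℕ) + (i:ℕ)) = 1 := Even.neg_one_pow ⟨i, rfl⟩
          rw [if_pos rfl, this]; ring
        · intro k _ hk
          have : ¬ ((k:ℕ) = (i:ℕ)) := fun h => hk (Fin.ext h)
          simp [this]
        · intro h; exact absurd (Finset.mem_univ i) h
    _ = 2 * π * ∑ i : Fin N, (v i) ^ 2 := by rw [Finset.mul_sum]; exact Finset.sum_congr rfl fun i _ => by ring

end Aux

/-- Let β > 0 and let (P_j) be the orthonormal polynomials for the weight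
e^{−x^β} on [0,∞), with deg P_j = j. Then the smallest eigenvalue λ_1(N) of
the Hankel matrix H_N = (μ_{i+j})_{i,j=0}^{N−1} satisfies
λ_1(N) ≥ 2π / Σ_{j=0}^{N} K_{jj}, where
K_{jj} = ∫_{−π}^{π} |P_j(−e^{iφ})|² dφ. -/
theorem smallest_eigenvalue_lower_bound (β : ℝ) (hβ : 0 < β) (P : ℕ → Polynomial ℝ)
    (hdeg : ∀ j : ℕ, (P j).degree = j)
    (horth : ∀ i j : ℕ,
      (∫ x in Ioi (0 : ℝ), (P i).eval x * (P j).eval x * Real.exp (-(x ^ β)))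
        = if i = j then 1 else 0)
    (N : ℕ) (hN : 1 ≤ N)
    (lam1 : ℝ)
    (h_eig : ∃ v : Fin N → ℝ, v ≠ 0 ∧
      (Matrix.of fun i j : Fin N =>
          ∫ x in Ioi (0 : ℝ), x ^ ((i : ℕ) + (j : ℕ)) * Real.exp (-(x ^ β))).mulVec v
        = lam1 • v)
    (h_min : ∀ (μ : ℝ) (v : Fin N → ℝ), v ≠ 0 →
      (Matrix.of fun i j : Fin N =>
          ∫ x in Ioi (0 : ℝ), x ^ ((i : ℕ) + (j : ℕ)) * Real.exp (-(x ^ β))).mulVec v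
        = μ • v → lam1 ≤ μ) :
    lam1 ≥ 2 * Real.pi /
      ∑ j ∈ Finset.range (N + 1),
        ∫ φ in (-Real.pi)..Real.pi,
          Complex.normSq (Polynomial.aeval (-Complex.exp (φ * Complex.I)) (P j)) := by
  classical
  obtain ⟨v, hv0, hv⟩ := h_eig
  set w : ℝ → ℝ := fun x => Real.exp (-(x ^ β)) with hw
  set T : ℝ := ∑ i : Fin N, (v i) ^ 2 with hTdef
  have hT : 0 < T := by
    obtain ⟨i, hi⟩ := Function.ne_iff.mp hv0
    exact Finset.sum_pos' (fun i _ => sq_nonneg _)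
      ⟨i, Finset.mem_univ i, lt_of_le_of_ne (sq_nonneg _) (Ne.symm (pow_ne_zero 2 hi))⟩
  set Q : ℝ[X] := ∑ i : Fin N, C (v i) * X ^ (i:ℕ) with hQ
  have hQdeg : Q.degree < (N : ℕ) := by
    refine lt_of_le_of_lt (Polynomial.degree_sum_le _ _) ?_
    rw [Finset.sup_lt_iff (by exact_mod_cast WithBot.bot_lt_coe N)]
    intro i _
    refine lt_of_le_of_lt (Polynomial.degree_C_mul_X_pow_le _ _) ?_
    exact_mod_cast i.isLt
  obtain ⟨c, hc⟩ := repr_lemma P hdeg N Q hQdeg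
  set A : ℝ := ∑ j ∈ Finset.range N, (c j) ^ 2 with hA
  have hQeval : ∀ x : ℝ, Q.eval x = ∑ i : Fin N, v i * x ^ (i:ℕ) := by
    intro x; rw [hQ, Polynomial.eval_finset_sum]
    exact Finset.sum_congr rfl fun i _ => by simp
  -- step 1 : ∫ Q² w = lam1 * T
  have hrow : ∀ i : Fin N,
      (∑ k : Fin N, (∫ x in Ioi (0:ℝ), x ^ ((i:ℕ) + (k:ℕ)) * w x) * v k) = lam1 * v i := by
    intro i
    have := congrFun hv i
    simpa [Matrix.mulVec, dotProduct, hw] using this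
  have key1 : (∫ x in Ioi (0:ℝ), (Q.eval x) ^ 2 * w x) = lam1 * T := by
    have hptw : ∀ x : ℝ, (Q.eval x) ^ 2 * w x
        = ∑ i : Fin N, ∑ k : Fin N, v i * v k * (x ^ ((i:ℕ) + (k:ℕ)) * w x) := by
      intro x
      rw [hQeval, sq, Finset.sum_mul_sum, Finset.sum_mul]
      refine Finset.sum_congr rfl fun i _ => ?_
      rw [Finset.sum_mul]
      refine Finset.sum_congr rfl fun k _ => ?_
      rw [pow_add]; ring
    calc (∫ x in Ioi (0:ℝ), (Q.eval x) ^ 2 * w x)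
        = ∫ x in Ioi (0:ℝ), ∑ i : Fin N, ∑ k : Fin N,
            v i * v k * (x ^ ((i:ℕ) + (k:ℕ)) * w x) := by
          exact integral_congr_ae (Filter.Eventually.of_forall fun x => hptw x)
      _ = ∑ i : Fin N, ∑ k : Fin N,
            v i * v k * ∫ x in Ioi (0:ℝ), x ^ ((i:ℕ) + (k:ℕ)) * w x := by
          rw [integral_finset_sum (μ := volume.restrict (Ioi 0)) Finset.univ
            (f := fun (i : Fin N) (x : ℝ) => ∑ k : Fin N, v i * v k * (x ^ ((i:ℕ) + (k:ℕ)) * w x))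
            (fun i _ => integrable_finset_sum _
              (fun k _ => (mono_int hβ ((i:ℕ) + (k:ℕ))).const_mul (v i * v k)))]
          refine Finset.sum_congr rfl fun i _ => ?_
          rw [integral_finset_sum (μ := volume.restrict (Ioi 0)) Finset.univ
            (f := fun (k : Fin N) (x : ℝ) => v i * v k * (x ^ ((i:ℕ) + (k:ℕ)) * w x))
            (fun k _ => (mono_int hβ ((i:ℕ) + (k:ℕ))).const_mul (v i * v k))]
          exact Finset.sum_congr rfl fun k _ => integral_const_mul _ _
      _ = ∑ i : Fin N, v i * (lam1 * v i) := by
          refine Finset.sum_congr rfl fun i _ => ?_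
          rw [← hrow i, Finset.mul_sum]
          exact Finset.sum_congr rfl fun k _ => by ring
      _ = lam1 * T := by
          rw [hTdef, Finset.mul_sum]
          exact Finset.sum_congr rfl fun i _ => by ring
  -- step 2 : ∫ Q² w = A
  have key2 : (∫ x in Ioi (0:ℝ), (Q.eval x) ^ 2 * w x) = A := by
    have hptw : ∀ x : ℝ, (Q.eval x) ^ 2 * w x
        = ∑ j ∈ Finset.range N, ∑ k ∈ Finset.range N,
            c j * c k * ((P j).eval x * (P k).eval x * w x) := by
      intro x
      rw [hc, Polynomial.eval_finset_sum, sq, Finset.sum_mul_sum, Finset.sum_mul]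
      refine Finset.sum_congr rfl fun j _ => ?_
      rw [Finset.sum_mul]
      refine Finset.sum_congr rfl fun k _ => ?_
      simp; ring
    have hintjk : ∀ j k : ℕ, IntegrableOn
        (fun x => c j * c k * ((P j).eval x * (P k).eval x * w x)) (Ioi (0:ℝ)) := by
      intro j k
      have h0 : IntegrableOn (fun x : ℝ => c j * c k * (eval x (P j * P k) * Real.exp (-(x ^ β)))) (Ioi 0) :=
        (poly_int hβ (P j * P k)).const_mul (c j * c k)
      refine h0.congr_fun (fun x _ => ?_) measurableSet_Ioi
      simp only [Polynomial.eval_mul, hw]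
    calc (∫ x in Ioi (0:ℝ), (Q.eval x) ^ 2 * w x)
        = ∫ x in Ioi (0:ℝ), ∑ j ∈ Finset.range N, ∑ k ∈ Finset.range N,
            c j * c k * ((P j).eval x * (P k).eval x * w x) :=
          integral_congr_ae (Filter.Eventually.of_forall fun x => hptw x)
      _ = ∑ j ∈ Finset.range N, ∑ k ∈ Finset.range N,
            c j * c k * ∫ x in Ioi (0:ℝ), (P j).eval x * (P k).eval x * w x := by
          rw [integral_finset_sum (μ := volume.restrict (Ioi 0)) (Finset.range N)
            (f := fun (j : ℕ) (x : ℝ) => ∑ k ∈ Finset.range N,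
              c j * c k * ((P j).eval x * (P k).eval x * w x))
            (fun j _ => integrable_finset_sum _ (fun k _ => hintjk j k))]
          refine Finset.sum_congr rfl fun j _ => ?_
          rw [integral_finset_sum (μ := volume.restrict (Ioi 0)) (Finset.range N)
            (f := fun (k : ℕ) (x : ℝ) => c j * c k * ((P j).eval x * (P k).eval x * w x))
            (fun k _ => hintjk j k)]
          exact Finset.sum_congr rfl fun k _ => integral_const_mul _ _
      _ = ∑ j ∈ Finset.range N, ∑ k ∈ Finset.range N,
            c j * c k * (if j = k then (1:ℝ) else 0) := by
          refine Finset.sum_congr rfl fun j _ => Finset.sum_congr rfl fun k _ => ?_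
          rw [hw, horth j k]
      _ = A := by
          rw [hA]
          refine Finset.sum_congr rfl fun j hj => ?_
          rw [Finset.sum_eq_single j]
          · simp [sq]
          · intro k _ hk; simp [Ne.symm hk]
          · intro h; exact absurd hj h
  have hAeq : A = lam1 * T := by rw [← key2, key1]
  -- step 3 : aeval identities
  have haev1 : ∀ φ : ℝ, Polynomial.aeval (-Complex.exp (φ * Complex.I)) Q
      = ∑ i : Fin N, (v i : ℂ) * (-Complex.exp (φ * Complex.I)) ^ (i:ℕ) := by
    intro φ
    rw [hQ, map_sum]
    exact Finset.sum_congr rfl fun i _ => by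
      rw [map_mul, map_pow, Polynomial.aeval_C, Polynomial.aeval_X]
      norm_num
  have haev2 : ∀ φ : ℝ, Polynomial.aeval (-Complex.exp (φ * Complex.I)) Q
      = ∑ j ∈ Finset.range N, (c j : ℂ)
          * Polynomial.aeval (-Complex.exp (φ * Complex.I)) (P j) := by
    intro φ
    rw [hc, map_sum]
    exact Finset.sum_congr rfl fun j _ => by
      rw [map_mul, Polynomial.aeval_C]; norm_num
  -- continuity facts
  have hzc : Continuous fun φ : ℝ => -Complex.exp (φ * Complex.I) :=
    (Complex.continuous_exp.comp (Complex.continuous_ofReal.mul continuous_const)).neg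
  have hPc : ∀ p : ℝ[X], Continuous fun φ : ℝ =>
      Complex.normSq (Polynomial.aeval (-Complex.exp (φ * Complex.I)) p) := by
    intro p
    exact Complex.continuous_normSq.comp ((p.continuous_aeval).comp hzc)
  -- step 4 : the main inequality chain
  set S : ℝ := ∑ j ∈ Finset.range (N + 1),
      ∫ φ in (-π)..π,
        Complex.normSq (Polynomial.aeval (-Complex.exp (φ * Complex.I)) (P j)) with hS
  have hKnonneg : ∀ j : ℕ, 0 ≤ ∫ φ in (-π)..π,
      Complex.normSq (Polynomial.aeval (-Complex.exp (φ * Complex.I)) (P j)) := by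
    intro j
    exact intervalIntegral.integral_nonneg (by linarith [Real.pi_pos])
      (fun x _ => Complex.normSq_nonneg _)
  have hS0 : 0 ≤ S := Finset.sum_nonneg fun j _ => hKnonneg j
  have hA0 : 0 ≤ A := Finset.sum_nonneg fun j _ => sq_nonneg _
  have chain : 2 * π * T ≤ A * S := by
    have e1 : 2 * π * T = ∫ φ in (-π)..π,
        Complex.normSq (Polynomial.aeval (-Complex.exp (φ * Complex.I)) Q) := by
      rw [← parseval N v]
      exact intervalIntegral.integral_congr (fun φ _ => by rw [haev1 φ])
    have e2 : (∫ φ in (-π)..π,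
          Complex.normSq (Polynomial.aeval (-Complex.exp (φ * Complex.I)) Q))
        ≤ ∫ φ in (-π)..π, A * ∑ j ∈ Finset.range N,
            Complex.normSq (Polynomial.aeval (-Complex.exp (φ * Complex.I)) (P j)) := by
      refine intervalIntegral.integral_mono_on (by linarith [Real.pi_pos])
        ((hPc Q).intervalIntegrable _ _)
        ((continuous_const.mul (continuous_finset_sum _ fun j _ => hPc (P j))).intervalIntegrable _ _)
        (fun φ _ => ?_)
      rw [haev2 φ]
      exact cs_pointwise (Finset.range N) c _
    have e3 : (∫ φ in (-π)..π, A * ∑ j ∈ Finset.range N,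
            Complex.normSq (Polynomial.aeval (-Complex.exp (φ * Complex.I)) (P j)))
        = A * ∑ j ∈ Finset.range N, ∫ φ in (-π)..π,
            Complex.normSq (Polynomial.aeval (-Complex.exp (φ * Complex.I)) (P j)) := by
      rw [intervalIntegral.integral_const_mul]
      congr 1
      exact intervalIntegral.integral_finset_sum
        (f := fun (j : ℕ) (φ : ℝ) =>
          Complex.normSq (Polynomial.aeval (-Complex.exp (φ * Complex.I)) (P j)))
        (fun j _ => (hPc (P j)).intervalIntegrable _ _)
    have e4 : A * (∑ j ∈ Finset.range N, ∫ φ in (-π)..π,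
            Complex.normSq (Polynomial.aeval (-Complex.exp (φ * Complex.I)) (P j))) ≤ A * S := by
      refine mul_le_mul_of_nonneg_left ?_ hA0
      rw [hS, Finset.sum_range_succ]
      linarith [hKnonneg N]
    calc 2 * π * T = _ := e1
      _ ≤ _ := e2
      _ = _ := e3
      _ ≤ A * S := e4
  rw [hAeq] at chain
  have hls : 2 * π ≤ lam1 * S := by
    have : (2 * π) * T ≤ (lam1 * S) * T := by
      calc (2 * π) * T ≤ lam1 * T * S := chain
        _ = (lam1 * S) * T := by ring
    exact le_of_mul_le_mul_right this hT
  have hSpos : 0 < S := by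
    rcases lt_or_eq_of_le hS0 with h | h
    · exact h
    · exfalso; rw [← h] at hls; simp at hls; linarith [Real.pi_pos]
  rw [ge_iff_le, div_le_iff₀ hSpos]
  exact hls
end

section
/- With f_2(N) = (1/(12π²))·[ −3π(2 + π − 2 log(4π)) + (log N)² + 3π log(N+1) + (3π − 2 log(N+1)) log N + (log(N+1))² ] and f_4(N) = (1/(240π⁴))·[ −30π³(π − 3 + log(4π)) + 2(log N)⁴ − 15π³ log(N+1) − 8(log N)³ log(N+1) − 20π² (log(N+1))² + 2(log(N+1))⁴ − 4(log N)²(5π² − 3(log(N+1))²) + (−15π³ + 40π² log(N+1) − 8(log(N+1))³) log N ], one has lim_{N→∞} (log N) · f_4(N) / f_2(N)² = −π/2; in particular f_4(N)/f_2(N)² = O(1/log N), so the quartic term is a small perturbation of the Gaussian saddle point integral for large N. -/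
open Filter Real Asymptotics

/-- The second Taylor coefficient at φ = 0 in the Laplace evaluation of
Σ_{j=0}^{N} K_{jj} for the weight e^{−√x}. -/
noncomputable def f₂ (N : ℕ) : ℝ :=
  (1 / (12 * π ^ 2)) *
    (-3 * π * (2 + π - 2 * Real.log (4 * π)) + (Real.log N) ^ 2
      + 3 * π * Real.log (N + 1)
      + (3 * π - 2 * Real.log (N + 1)) * Real.log N
      + (Real.log (N + 1)) ^ 2)

/-- The fourth Taylor coefficient at φ = 0 in the Laplace evaluation of
Σ_{j=0}^{N} K_{jj} for the weight e^{−√x}. -/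
noncomputable def f₄ (N : ℕ) : ℝ :=
  (1 / (240 * π ^ 4)) *
    (-30 * π ^ 3 * (π - 3 + Real.log (4 * π))
      + 2 * (Real.log N) ^ 4
      - 15 * π ^ 3 * Real.log (N + 1)
      - 8 * (Real.log N) ^ 3 * Real.log (N + 1)
      - 20 * π ^ 2 * (Real.log (N + 1)) ^ 2
      + 2 * (Real.log (N + 1)) ^ 4
      - 4 * (Real.log N) ^ 2 * (5 * π ^ 2 - 3 * (Real.log (N + 1)) ^ 2)
      + (-15 * π ^ 3 + 40 * π ^ 2 * Real.log (N + 1) - 8 * (Real.log (N + 1)) ^ 3)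
          * Real.log N)

/-- Auxiliary constant: the constant term in `12π² f₂`. -/
noncomputable def auxC2 : ℝ := -3 * π * (2 + π - 2 * Real.log (4 * π))

/-- Auxiliary constant: the constant term in `240π⁴ f₄`. -/
noncomputable def auxC4 : ℝ := -30 * π ^ 3 * (π - 3 + Real.log (4 * π))

/-- The ratio `log N · f₄ / f₂²` expressed as a function of
`(1 / log N, log(N+1) − log N)`. -/
noncomputable def auxPhi (p : ℝ × ℝ) : ℝ :=
  (p.1 * (2 * p.2 ^ 4 - 20 * π ^ 2 * p.2 ^ 2 - 15 * π ^ 3 * p.2 + auxC4) - 30 * π ^ 3)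
      / (240 * π ^ 4)
    / ((p.1 * (p.2 ^ 2 + 3 * π * p.2 + auxC2) + 6 * π) ^ 2 / (144 * π ^ 4))

lemma auxPhi_val : auxPhi (0, 0) = -π / 2 := by
  have hπ := Real.pi_ne_zero
  unfold auxPhi
  simp only
  norm_num
  field_simp
  ring

lemma auxPhi_cont : ContinuousAt auxPhi (0, 0) := by
  have hπ := Real.pi_ne_zero
  apply ContinuousAt.div
  · fun_prop
  · fun_prop
  · simp only
    norm_num

lemma aux_alg (L d : ℝ) (hL : L ≠ 0) :
    L * ((2 * d ^ 4 - 20 * π ^ 2 * d ^ 2 - 15 * π ^ 3 * d + auxC4 - 30 * π ^ 3 * L)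
        / (240 * π ^ 4))
      / (((6 * π * L + (d ^ 2 + 3 * π * d + auxC2)) / (12 * π ^ 2)) ^ 2)
    = auxPhi (1 / L, d) := by
  have hπ := Real.pi_ne_zero
  unfold auxPhi
  simp only
  set B := 2 * d ^ 4 - 20 * π ^ 2 * d ^ 2 - 15 * π ^ 3 * d + auxC4 with hB
  set A := d ^ 2 + 3 * π * d + auxC2 with hA
  have e1 : 1 / L * B - 30 * π ^ 3 = (B - 30 * π ^ 3 * L) / L := by
    field_simp
  have e2 : 1 / L * A + 6 * π = (6 * π * L + A) / L := by
    field_simp; ring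
  rw [e1, e2]
  set Y := 6 * π * L + A with hY
  rcases eq_or_ne Y 0 with h | h
  · simp [h]
  · field_simp
    ring

lemma aux_f₂_eq (N : ℕ) :
    f₂ N = (6 * π * Real.log N
        + ((Real.log (N + 1) - Real.log N) ^ 2
            + 3 * π * (Real.log (N + 1) - Real.log N) + auxC2))
      / (12 * π ^ 2) := by
  unfold f₂ auxC2
  ring

lemma aux_f₄_eq (N : ℕ) :
    f₄ N = (2 * (Real.log (N + 1) - Real.log N) ^ 4
        - 20 * π ^ 2 * (Real.log (N + 1) - Real.log N) ^ 2
        - 15 * π ^ 3 * (Real.log (N + 1) - Real.log N) + auxC4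
        - 30 * π ^ 3 * Real.log N)
      / (240 * π ^ 4) := by
  unfold f₄ auxC4
  ring

lemma aux_hu : Tendsto (fun N : ℕ => 1 / Real.log N) atTop (nhds 0) := by
  simp only [one_div]
  exact tendsto_inv_atTop_zero.comp
    (Real.tendsto_log_atTop.comp tendsto_natCast_atTop_atTop)

lemma aux_hd :
    Tendsto (fun N : ℕ => Real.log (N + 1) - Real.log N) atTop (nhds 0) := by
  have h1 : Tendsto (fun N : ℕ => (1 : ℝ) + 1 / N) atTop (nhds 1) := by
    have : Tendsto (fun N : ℕ => 1 / (N : ℝ)) atTop (nhds 0) := tendsto_one_div_atTop_nhds_zero_nat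
    simpa using tendsto_const_nhds.add this
  have h2 : Tendsto (fun N : ℕ => Real.log (1 + 1 / N)) atTop (nhds 0) := by
    have := (Real.continuousAt_log (by norm_num : (1:ℝ) ≠ 0)).tendsto.comp h1
    simpa [Function.comp_def] using this
  refine h2.congr' ?_
  filter_upwards [eventually_ge_atTop 1] with N hN
  have hN0 : (N : ℝ) ≠ 0 := by
    simp only [ne_eq, Nat.cast_eq_zero]; omega
  have hN1 : (N : ℝ) + 1 ≠ 0 := by positivity
  have : (1 : ℝ) + 1 / N = ((N : ℝ) + 1) / N := by field_simp
  rw [this, Real.log_div hN1 hN0]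

lemma aux_logN_ne (N : ℕ) (hN : 2 ≤ N) : Real.log N ≠ 0 := by
  have : (1 : ℝ) < N := by
    have : (2 : ℝ) ≤ N := by exact_mod_cast hN
    linarith
  exact ne_of_gt (Real.log_pos this)

lemma aux_eventual_eq :
    (fun N : ℕ => Real.log N * f₄ N / (f₂ N) ^ 2) =ᶠ[atTop]
      fun N : ℕ => auxPhi (1 / Real.log N, Real.log (N + 1) - Real.log N) := by
  filter_upwards [eventually_ge_atTop 2] with N hN
  rw [aux_f₂_eq, aux_f₄_eq]
  exact aux_alg _ _ (aux_logN_ne N hN)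

/-- lim_{N→∞} (log N) · f₄(N) / f₂(N)² = −π/2; in particular
f₄(N)/f₂(N)² = O(1/log N). -/
theorem f₄_div_f₂_sq_asymptotics :
    Tendsto (fun N : ℕ => Real.log N * f₄ N / (f₂ N) ^ 2) atTop (nhds (-π / 2)) ∧
    (fun N : ℕ => f₄ N / (f₂ N) ^ 2) =O[atTop] (fun N : ℕ => 1 / Real.log N) := by
  have hpair : Tendsto (fun N : ℕ => (1 / Real.log N, Real.log (N + 1) - Real.log N))
      atTop (nhds ((0 : ℝ), (0 : ℝ))) := aux_hu.prodMk_nhds aux_hd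
  have hmain : Tendsto (fun N : ℕ => Real.log N * f₄ N / (f₂ N) ^ 2) atTop
      (nhds (-π / 2)) := by
    have := auxPhi_cont.tendsto.comp hpair
    rw [auxPhi_val] at this
    exact Tendsto.congr' aux_eventual_eq.symm this
  refine ⟨hmain, ?_⟩
  have h1 : (fun N : ℕ => Real.log N * f₄ N / (f₂ N) ^ 2) =O[atTop]
      (fun _ : ℕ => (1 : ℝ)) := hmain.isBigO_one ℝ
  have h2 := h1.mul (isBigO_refl (fun N : ℕ => 1 / Real.log N) atTop)
  refine h2.congr' ?_ ?_
  · filter_upwards [eventually_ge_atTop 2] with N hN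
    have hL := aux_logN_ne N hN
    calc Real.log N * f₄ N / (f₂ N) ^ 2 * (1 / Real.log N)
        = f₄ N / (f₂ N) ^ 2 * (Real.log N * (1 / Real.log N)) := by ring
      _ = f₄ N / (f₂ N) ^ 2 := by
          rw [mul_one_div_cancel hL, mul_one]
  · filter_upwards with N
    simp
end
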